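/- A completely positive trace-preserving map E from system B to system A is entanglement breaking if and only if the Choi–Jamiołkowski state ρ = (E ⊗ I)(|φ⟩⟨φ|), where |φ⟩ = (1/√N_B) ∑_α |α⟩|α⟩ is maximally entangled, is separable. -/

import Mathlib

open Matrix Kronecker
open scoped ComplexOrder

/-- The map `E ⊗ I` acting on a bipartite matrix on `ℂ^{N_B} ⊗ ℂ^K`, where `E` acts on
matrices on `ℂ^{N_B}` and produces matrices on `ℂ^{N_A}`. -/
def tensorId {NA NB K : ℕ}
    (E : Matrix (Fin NB) (Fin NB) ℂ →ₗ[ℂ] Matrix (Fin NA) (Fin NA) ℂ)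
    (M : Matrix (Fin NB × Fin K) (Fin NB × Fin K) ℂ) :
    Matrix (Fin NA × Fin K) (Fin NA × Fin K) ℂ :=
  Matrix.of fun p q => E (Matrix.of fun a b => M (a, p.2) (b, q.2)) p.1 q.1

/-- A bipartite matrix is separable if it is a convex combination of (density-operator)
product states. -/
def IsSeparableState {NA K : ℕ} (M : Matrix (Fin NA × Fin K) (Fin NA × Fin K) ℂ) : Prop :=
  ∃ (n : ℕ) (p : Fin n → ℝ) (A : Fin n → Matrix (Fin NA) (Fin NA) ℂ)
    (B : Fin n → Matrix (Fin K) (Fin K) ℂ),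
    (∀ i, 0 ≤ p i) ∧ (∑ i, p i) = 1 ∧
    (∀ i, (A i).PosSemidef ∧ (A i).trace = 1) ∧
    (∀ i, (B i).PosSemidef ∧ (B i).trace = 1) ∧
    M = ∑ i, (p i : ℂ) • (A i ⊗ₖ B i)

/-- `E` is completely positive: `E ⊗ I_K` preserves positive semidefiniteness for all `K`. -/
def IsCompletelyPositive {NA NB : ℕ}
    (E : Matrix (Fin NB) (Fin NB) ℂ →ₗ[ℂ] Matrix (Fin NA) (Fin NA) ℂ) : Prop :=
  ∀ (K : ℕ) (M : Matrix (Fin NB × Fin K) (Fin NB × Fin K) ℂ),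
    M.PosSemidef → (tensorId E M).PosSemidef

/-- `E` is entanglement breaking: `E ⊗ I` maps every state to a separable state. -/
def IsEntanglementBreaking {NA NB : ℕ}
    (E : Matrix (Fin NB) (Fin NB) ℂ →ₗ[ℂ] Matrix (Fin NA) (Fin NA) ℂ) : Prop :=
  ∀ (K : ℕ) (σ : Matrix (Fin NB × Fin K) (Fin NB × Fin K) ℂ),
    σ.PosSemidef → σ.trace = 1 → IsSeparableState (tensorId E σ)

/-- The Choi–Jamiołkowski state `(E ⊗ I)(|φ⟩⟨φ|)`, with
`|φ⟩ = (1/√N_B) ∑_α |α⟩|α⟩` maximally entangled. -/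
noncomputable def choiState {NA NB : ℕ}
    (E : Matrix (Fin NB) (Fin NB) ℂ →ₗ[ℂ] Matrix (Fin NA) (Fin NA) ℂ) :
    Matrix (Fin NA × Fin NB) (Fin NA × Fin NB) ℂ :=
  tensorId E (Matrix.of fun p q =>
    if p.1 = p.2 ∧ q.1 = q.2 then (1 / (NB : ℂ)) else 0)

/-! ### Auxiliary lemmas -/

lemma psd_smul_real {n : Type*} [Fintype n] {M : Matrix n n ℂ} (hM : M.PosSemidef)
    {c : ℝ} (hc : 0 ≤ c) : ((c : ℂ) • M).PosSemidef := by
  constructor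
  · unfold Matrix.IsHermitian
    rw [Matrix.conjTranspose_smul, hM.1]
    simp
  · intro x
    exact (hM.smul (a := (c:ℂ)) (by exact_mod_cast hc)).2 x

lemma psd_diag_nonneg {n : Type*} [Fintype n] [DecidableEq n] {M : Matrix n n ℂ}
    (hM : M.PosSemidef) (k : n) : 0 ≤ M k k := by
  exact hM.diag_nonneg

lemma psd_trace_nonneg {n : Type*} [Fintype n] [DecidableEq n] {M : Matrix n n ℂ}
    (hM : M.PosSemidef) : 0 ≤ M.trace :=
  Finset.sum_nonneg fun k _ => psd_diag_nonneg hM k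

lemma psd_trace_zero {n : Type*} [Fintype n] [DecidableEq n] {M : Matrix n n ℂ}
    (hM : M.PosSemidef) (h : M.trace = 0) : M = 0 := by
  have hd : ∀ k, M k k = 0 := fun k =>
    (Finset.sum_eq_zero_iff_of_nonneg
      (fun k _ => psd_diag_nonneg hM k)).mp h k (Finset.mem_univ k)
  have hcol : ∀ k, M *ᵥ Pi.single k 1 = 0 := by
    intro k
    apply (hM.dotProduct_mulVec_zero_iff (Pi.single k 1)).mp
    simpa [dotProduct, Matrix.mulVec, Pi.single_apply] using hd k
  ext i j
  have := congrFun (hcol j) i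
  simpa [Matrix.mulVec, dotProduct, Pi.single_apply] using this

lemma psd_sum {n ι : Type*} [Fintype n] [Fintype ι] {M : ι → Matrix n n ℂ}
    (h : ∀ i, (M i).PosSemidef) : (∑ i, M i).PosSemidef := by
  classical
  exact Finset.sum_induction M Matrix.PosSemidef
    (fun a b ha hb => ha.add hb) Matrix.PosSemidef.zero (fun i _ => h i)

/-- A completely positive trace-preserving map `E` from system B to
system A is entanglement breaking if and only if its Choi–Jamiołkowski state
`ρ = (E ⊗ I)(|φ⟩⟨φ|)` is separable. -/
theorem stmt_16 (NA NB : ℕ) (hB : 1 ≤ NB)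
    (E : Matrix (Fin NB) (Fin NB) ℂ →ₗ[ℂ] Matrix (Fin NA) (Fin NA) ℂ)
    (hcp : IsCompletelyPositive E)
    (htp : ∀ M, (E M).trace = M.trace) :
    IsEntanglementBreaking E ↔ IsSeparableState (choiState E) := by
  have hNB : (NB:ℂ) ≠ 0 := Nat.cast_ne_zero.mpr (by omega)
  constructor
  · -- Forward: apply entanglement breaking to the maximally entangled state.
    intro hEB
    have hPSD : (Matrix.of fun (p q : Fin NB × Fin NB) =>
        if p.1 = p.2 ∧ q.1 = q.2 then (1 / (NB : ℂ)) else 0).PosSemidef := by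
      have h0 : (Matrix.of fun (p q : Fin NB × Fin NB) =>
          if p.1 = p.2 ∧ q.1 = q.2 then (1 / (NB : ℂ)) else 0)
          = ((1/(NB:ℝ) : ℝ) : ℂ) •
            ((Matrix.of fun (_ : Fin 1) (q : Fin NB × Fin NB) =>
              if q.1 = q.2 then (1:ℂ) else 0)ᴴ *
             (Matrix.of fun (_ : Fin 1) (q : Fin NB × Fin NB) =>
              if q.1 = q.2 then (1:ℂ) else 0)) := by
        ext p q
        by_cases h1 : p.1 = p.2 <;> by_cases h2 : q.1 = q.2 <;>
          simp [Matrix.mul_apply, Matrix.conjTranspose_apply, h1, h2]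
      rw [h0]
      exact psd_smul_real (Matrix.posSemidef_conjTranspose_mul_self _) (by positivity)
    have htr : (Matrix.of fun (p q : Fin NB × Fin NB) =>
        if p.1 = p.2 ∧ q.1 = q.2 then (1 / (NB : ℂ)) else 0).trace = 1 := by
      simp only [Matrix.trace, Matrix.diag_apply, Matrix.of_apply, and_self,
        Fintype.sum_prod_type]
      simp [Finset.sum_ite_eq, Finset.card_univ, hNB]
    exact hEB NB _ hPSD htr
  · -- Reverse: a separable Choi state gives a measure-and-prepare form.
    rintro ⟨n, p, A, B, hp, hpsum, hA, hB', hsep⟩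
    intro K σ hσ hστ
    have hK : 0 < K := by
      by_contra h
      have hK0 : K = 0 := by omega
      subst hK0
      have h0 : σ.trace = 0 := by
        rw [Matrix.trace]
        simp [Matrix.diag, Fintype.sum_prod_type]
      rw [hστ] at h0
      exact (one_ne_zero : (1:ℂ) ≠ 0) h0
    -- Reconstruct `E` from the Choi state.
    have hstd : ∀ (α β : Fin NB) (a b : Fin NA),
        E (single α β 1) a b = (NB:ℂ) * ∑ i, (p i : ℂ) * (A i a b * B i α β) := by
      intro α β a b
      have h0 : (Matrix.of fun a' b' : Fin NB => if a' = α ∧ b' = β then (1/(NB:ℂ)) else 0)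
          = (1/(NB:ℂ)) • single α β (1:ℂ) := by
        ext a' b'
        simp [Matrix.single, eq_comm]
      have h1 : choiState E (a,α) (b,β) = (1/(NB:ℂ)) * E (single α β 1) a b := by
        show E (Matrix.of fun a' b' => if a' = α ∧ b' = β then (1/(NB:ℂ)) else 0) a b = _
        rw [h0, _root_.map_smul]
        simp
      have h2 : choiState E (a,α) (b,β) = ∑ i, (p i:ℂ) * (A i a b * B i α β) := by
        rw [hsep]
        simp [Matrix.sum_apply, Matrix.kroneckerMap_apply, mul_assoc]
      rw [h2] at h1
      field_simp at h1
      rw [← h1]; simp only [mul_assoc]; ring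
    have hEM : ∀ (M : Matrix (Fin NB) (Fin NB) ℂ) (a b : Fin NA),
        E M a b = ∑ i, (p i:ℂ) * (A i a b * ((NB:ℂ) * ∑ α, ∑ β, M α β * B i α β)) := by
      intro M a b
      conv_lhs => rw [Matrix.matrix_eq_sum_single M]
      simp only [map_sum, Matrix.sum_apply]
      have hterm : ∀ (α β : Fin NB),
          E (single α β (M α β)) a b
            = M α β * ((NB:ℂ) * ∑ i, (p i : ℂ) * (A i a b * B i α β)) := by
        intro α β
        have h3 : single α β (M α β) = M α β • single α β (1:ℂ) := by
          rw [Matrix.smul_single]; simp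
        rw [h3, _root_.map_smul, Matrix.smul_apply, hstd, smul_eq_mul]
      calc ∑ α, ∑ β, E (single α β (M α β)) a b
          = ∑ α, ∑ β, ∑ i, (p i:ℂ) * (A i a b * ((NB:ℂ) * (M α β * B i α β))) := by
            refine Finset.sum_congr rfl fun α _ => Finset.sum_congr rfl fun β _ => ?_
            rw [hterm, Finset.mul_sum, Finset.mul_sum]
            exact Finset.sum_congr rfl fun i _ => by ring
        _ = ∑ α, ∑ i, ∑ β, (p i:ℂ) * (A i a b * ((NB:ℂ) * (M α β * B i α β))) :=
            Finset.sum_congr rfl fun α _ => Finset.sum_comm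
        _ = ∑ i, ∑ α, ∑ β, (p i:ℂ) * (A i a b * ((NB:ℂ) * (M α β * B i α β))) :=
            Finset.sum_comm
        _ = ∑ i, (p i:ℂ) * (A i a b * ((NB:ℂ) * ∑ α, ∑ β, M α β * B i α β)) := by
            simp only [Finset.mul_sum]
    -- The measured states on system K.
    set C : Fin n → Matrix (Fin K) (Fin K) ℂ := fun i => Matrix.of fun k l =>
      (NB:ℂ) * ∑ α, ∑ β, σ (α,k) (β,l) * B i α β with hCdef
    have hten : tensorId E σ = ∑ i, (p i : ℂ) • (A i ⊗ₖ C i) := by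
      ext ⟨a,k⟩ ⟨b,l⟩
      rw [Matrix.sum_apply]
      show E (Matrix.of fun α β => σ (α,k) (β,l)) a b = _
      rw [hEM]
      refine Finset.sum_congr rfl fun i _ => ?_
      simp only [Matrix.smul_apply, Matrix.kroneckerMap_apply, hCdef, Matrix.of_apply,
        smul_eq_mul]
    have hCpsd : ∀ i, (C i).PosSemidef := by
      intro i
      obtain ⟨N, hN⟩ : ∃ N : Matrix (Fin NB) (Fin NB) ℂ, B i = Nᴴ * N := by
        open scoped MatrixOrder in
        obtain ⟨X, hX, -, hXe⟩ := CFC.exists_sqrt_of_isSelfAdjoint_of_quasispectrumRestricts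
          (hB' i).1.isHermitian (QuasispectrumRestricts.nnreal_of_nonneg (hB' i).1.nonneg)
        exact ⟨X, by rw [← hXe, ← Matrix.star_eq_conjTranspose, hX.star_eq]⟩
      set W : Fin NB → Matrix (Fin NB × Fin K) (Fin K) ℂ :=
        fun m => Matrix.of fun q l => N m q.1 * (if q.2 = l then 1 else 0) with hW
      have key : C i = ((NB:ℝ) : ℂ) • ∑ m, (W m)ᴴ * σ * (W m) := by
        ext k l
        rw [Matrix.smul_apply, Matrix.sum_apply]
        have hterm : ∀ m, ((W m)ᴴ * σ * (W m)) k l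
            = ∑ α, ∑ β, star (N m α) * N m β * σ (α,k) (β,l) := by
          intro m
          simp only [Matrix.mul_apply, Matrix.conjTranspose_apply, hW, Matrix.of_apply,
            Fintype.sum_prod_type, star_mul', star_one, star_zero, mul_ite, ite_mul,
            mul_zero, zero_mul, mul_one, one_mul, Finset.sum_ite_eq,
            Finset.sum_ite_eq', Finset.mem_univ, if_true, Finset.sum_mul, Finset.mul_sum]
          rw [Finset.sum_comm]
          refine Finset.sum_congr rfl fun α _ => Finset.sum_congr rfl fun β _ => ?_
          simp [apply_ite (star : ℂ → ℂ), ite_mul, zero_mul, Finset.sum_ite_eq',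
            mul_comm, mul_left_comm, mul_assoc]
        have hBa : ∀ α β, B i α β = ∑ m, star (N m α) * N m β := by
          intro α β; rw [hN]; simp [Matrix.mul_apply, Matrix.conjTranspose_apply]
        simp only [hterm, hCdef, Matrix.of_apply]
        push_cast
        rw [smul_eq_mul]
        congr 1
        calc ∑ α, ∑ β, σ (α,k) (β,l) * B i α β
            = ∑ α, ∑ β, ∑ m, star (N m α) * N m β * σ (α,k) (β,l) := by
              refine Finset.sum_congr rfl fun α _ => Finset.sum_congr rfl fun β _ => ?_
              rw [hBa α β, Finset.mul_sum]
              exact Finset.sum_congr rfl fun m _ => by ring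
          _ = ∑ α, ∑ m, ∑ β, star (N m α) * N m β * σ (α,k) (β,l) :=
              Finset.sum_congr rfl fun α _ => Finset.sum_comm
          _ = ∑ m, ∑ α, ∑ β, star (N m α) * N m β * σ (α,k) (β,l) :=
              Finset.sum_comm
      rw [key]
      exact psd_smul_real (psd_sum fun m => hσ.conjTranspose_mul_mul_same (W m))
        (by positivity)
    -- Trace bookkeeping.
    have htr1 : (tensorId E σ).trace = 1 := by
      calc (tensorId E σ).trace
          = ∑ a : Fin NA, ∑ k : Fin K, E (Matrix.of fun α β => σ (α,k) (β,k)) a a := by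
            rw [Matrix.trace]
            simp [Matrix.diag, tensorId, Fintype.sum_prod_type]
        _ = ∑ k : Fin K, ∑ a : Fin NA, E (Matrix.of fun α β => σ (α,k) (β,k)) a a :=
            Finset.sum_comm
        _ = ∑ k : Fin K, (E (Matrix.of fun α β => σ (α,k) (β,k))).trace := rfl
        _ = ∑ k : Fin K, (Matrix.of fun α β : Fin NB => σ (α,k) (β,k)).trace := by
            simp only [htp]
        _ = ∑ k : Fin K, ∑ α : Fin NB, σ (α,k) (α,k) := rfl
        _ = ∑ α : Fin NB, ∑ k : Fin K, σ (α,k) (α,k) := Finset.sum_comm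
        _ = σ.trace := by
            rw [Matrix.trace]
            simp [Matrix.diag, Fintype.sum_prod_type]
        _ = 1 := hστ
    have htr2 : ∑ i, (p i:ℂ) * (C i).trace = 1 := by
      calc ∑ i, (p i:ℂ) * (C i).trace
          = (∑ i, (p i:ℂ) • (A i ⊗ₖ C i)).trace := by
            rw [Matrix.trace_sum]
            refine Finset.sum_congr rfl fun i _ => ?_
            rw [Matrix.trace_smul, Matrix.trace_kronecker, (hA i).2, one_mul, smul_eq_mul]
        _ = (tensorId E σ).trace := by rw [hten]
        _ = 1 := htr1
    have htre : ∀ i, (C i).trace = (((C i).trace.re : ℝ) : ℂ) ∧ 0 ≤ (C i).trace.re := by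
      intro i
      have h := psd_trace_nonneg (hCpsd i)
      rw [Complex.le_def] at h
      refine ⟨?_, by simpa using h.1⟩
      apply Complex.ext
      · simp
      · simp [← h.2]
    -- Normalized weights and states.
    set q : Fin n → ℝ := fun i => p i * (C i).trace.re with hqdef
    have hq0 : ∀ i, 0 ≤ q i := fun i => mul_nonneg (hp i) (htre i).2
    have hqsum : ∑ i, q i = 1 := by
      have hcast : ((∑ i, q i : ℝ) : ℂ) = 1 := by
        simp only [hqdef]
        push_cast
        rw [← htr2]
        refine Finset.sum_congr rfl fun i _ => ?_
        rw [← (htre i).1]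
      exact_mod_cast hcast
    set D0 : Matrix (Fin K) (Fin K) ℂ := Matrix.diagonal (Pi.single ⟨0, hK⟩ 1) with hD0
    have hD0psd : D0.PosSemidef := by
      refine Matrix.PosSemidef.diagonal fun j => ?_
      rcases eq_or_ne j ⟨0, hK⟩ with h | h <;> simp [Pi.single_apply, h]
    have hD0tr : D0.trace = 1 := by
      simp [hD0, Matrix.trace_diagonal]
    set B2 : Fin n → Matrix (Fin K) (Fin K) ℂ := fun i =>
      if (C i).trace.re = 0 then D0 else ((((C i).trace.re)⁻¹ : ℝ) : ℂ) • C i with hB2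
    refine ⟨n, q, A, B2, hq0, hqsum, hA, ?_, ?_⟩
    · intro i
      by_cases h : (C i).trace.re = 0
      · simp only [hB2, if_pos h]
        exact ⟨hD0psd, hD0tr⟩
      · simp only [hB2, if_neg h]
        refine ⟨psd_smul_real (hCpsd i) (inv_nonneg.mpr (htre i).2), ?_⟩
        rw [Matrix.trace_smul, (htre i).1, smul_eq_mul]
        simp only [Complex.ofReal_re]
        rw [← Complex.ofReal_mul, inv_mul_cancel₀ h]
        simp
    · rw [hten]
      refine Finset.sum_congr rfl fun i _ => ?_
      by_cases h : (C i).trace.re = 0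
      · have htz : (C i).trace = 0 := by rw [(htre i).1, h]; simp
        have hC0 : C i = 0 := psd_trace_zero (hCpsd i) htz
        have hq0' : q i = 0 := by rw [hqdef]; simp [h]
        simp [hC0, hq0', Matrix.kronecker_zero]
      · simp only [hB2, if_neg h]
        rw [Matrix.kronecker_smul, smul_smul]
        have hs : (q i:ℂ) * ((((C i).trace.re)⁻¹ : ℝ) : ℂ) = (p i:ℂ) := by
          have hr : q i * ((C i).trace.re)⁻¹ = p i := by
            rw [hqdef]
            field_simp
          exact_mod_cast hr
        rw [hs]
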